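/- Let 𝒢 be a finite collection of triangles in 𝔗, maximal with respect to inclusion, and let G be their union. Then for every k ≥ 1, the set Ω_k of points belonging to exactly k triangles of 𝒢 satisfies |Ω_k| ≤ 2^{2−k} |G|. -/

import Mathlib

open scoped ENNReal NNReal
open Set

/-- A locally finite tree presented via the data induced by a fixed geodesic ray `ω`:
a predecessor map `pred`, a height (Busemann) function `ht` increasing by one along `pred`,
finite successor sets, and connectedness (any two vertices have a common ancestor). -/
structure TreeData (V : Type*) where
  pred : V → V
  ht : V → ℤ
  ht_pred : ∀ x, ht (pred x) = ht x + 1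
  fiber_finite : ∀ x, {y | pred y = x}.Finite
  connected : ∀ x y, ∃ k l : ℕ, pred^[k] x = pred^[l] y

namespace TreeData

variable {V : Type*}

/-- The set of successors of a vertex. -/
def succs (t : TreeData V) (x : V) : Set V := {y | t.pred y = x}

/-- Every vertex has at least 3 neighbours, i.e. at least 2 successors. -/
def Thick (t : TreeData V) : Prop := ∀ x, 2 ≤ (t.succs x).ncard

/-- Homogeneous tree `𝔗_b`: every vertex has exactly `b+1` neighbours, i.e. `b` successors. -/
def Homog (t : TreeData V) (b : ℕ) : Prop := ∀ x, (t.succs x).ncard = b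

/-- The triangle with vertex `x` and height `R`: all descendants of `x` within `R` generations. -/
def tri (t : TreeData V) (x : V) (R : ℕ) : Set V := {y | ∃ j ≤ R, t.pred^[j] y = x}

/-- The base of the triangle with vertex `x` and height `R`: the `R`-fold successors of `x`. -/
def base (t : TreeData V) (x : V) (R : ℕ) : Set V := {y | t.pred^[R] y = x}

/-- The graph distance on the tree. -/
noncomputable def dist (t : TreeData V) (x y : V) : ℕ :=
  sInf {n | ∃ k l : ℕ, k + l = n ∧ t.pred^[k] x = t.pred^[l] y}

/-- Number of points of a set, as an element of `ℝ≥0∞` (counting measure). -/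
noncomputable def esize (E : Set V) : ℝ≥0∞ := ∑' _ : E, (1 : ℝ≥0∞)

/-- The average of `|f|` over a set, with respect to counting measure. -/
noncomputable def setAvg (t : TreeData V) (S : Set V) (f : V → ℝ) : ℝ≥0∞ :=
  (∑' y : S, (‖f y‖₊ : ℝ≥0∞)) / (S.ncard : ℝ≥0∞)

/-- The centred triangular maximal operator `𝒯`. -/
noncomputable def cmax (t : TreeData V) (f : V → ℝ) (x : V) : ℝ≥0∞ :=
  ⨆ R : ℕ, t.setAvg (t.tri x R) f

/-- The uncentred triangular maximal operator `𝒰`. -/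
noncomputable def umax (t : TreeData V) (f : V → ℝ) (x : V) : ℝ≥0∞ :=
  ⨆ (v : V) (R : ℕ) (_ : x ∈ t.tri v R), t.setAvg (t.tri v R) f

/-- The uncentred base maximal operator `ℬᵘ`. -/
noncomputable def ubmax (t : TreeData V) (f : V → ℝ) (x : V) : ℝ≥0∞ :=
  ⨆ (v : V) (R : ℕ) (_ : x ∈ t.tri v R), t.setAvg (t.base v R) f

/-- The modified triangle `T'_r(x) = T_r(x) ∪ {p^r(x)}`. -/
def mtri (t : TreeData V) (x : V) (r : ℕ) : Set V := t.tri x r ∪ {t.pred^[r] x}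

/-- The modified centred triangular maximal operator `𝒯'`. -/
noncomputable def cmax' (t : TreeData V) (f : V → ℝ) (x : V) : ℝ≥0∞ :=
  ⨆ r : ℕ, t.setAvg (t.mtri x r) f

/-- The modified uncentred triangular maximal operator `𝒰'`. -/
noncomputable def umax' (t : TreeData V) (f : V → ℝ) (x : V) : ℝ≥0∞ :=
  ⨆ (v : V) (r : ℕ) (_ : x ∈ t.mtri v r), t.setAvg (t.mtri v r) f

/-- The `ℓ^p` norm with respect to counting measure, for `p ∈ [1,∞]`. -/
noncomputable def eLp (p : ℝ≥0∞) (g : V → ℝ≥0∞) : ℝ≥0∞ :=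
  if p = ∞ then ⨆ v, g v else (∑' v, g v ^ p.toReal) ^ (1 / p.toReal)

/-- `|f|` as an `ℝ≥0∞`-valued function. -/
noncomputable def nn (f : V → ℝ) (x : V) : ℝ≥0∞ := (‖f x‖₊ : ℝ≥0∞)

/-- The point mass at `o`. -/
noncomputable def delta (o : V) : V → ℝ := ({o} : Set V).indicator fun _ => 1

end TreeData

namespace TreeData
variable {V : Type*} (t : TreeData V)

lemma ht_iterate (x : V) (n : ℕ) : t.ht (t.pred^[n] x) = t.ht x + n := by
  induction n with
  | zero => simp
  | succ n ih => rw [Function.iterate_succ_apply', t.ht_pred, ih]; push_cast; ring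

lemma base_succ_eq (x : V) (n : ℕ) :
    t.base x (n + 1) = ⋃ w ∈ t.succs x, t.base w n := by
  ext y
  simp only [base, succs, mem_setOf_eq, mem_iUnion, Function.iterate_succ_apply']
  constructor
  · intro h; exact ⟨t.pred^[n] y, h, rfl⟩
  · rintro ⟨w, hw, rfl⟩; exact hw

lemma base_finite (x : V) (n : ℕ) : (t.base x n).Finite := by
  induction n generalizing x with
  | zero => simpa [base] using Set.finite_singleton x
  | succ n ih =>
    rw [base_succ_eq]
    exact Set.Finite.biUnion (t.fiber_finite x) fun w _ => ih w

lemma tri_finite (x : V) (R : ℕ) : (t.tri x R).Finite := by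
  have h : t.tri x R ⊆ ⋃ j ∈ Finset.range (R + 1), t.base x j := by
    rintro y ⟨j, hj, hjy⟩
    exact Set.mem_biUnion (Finset.mem_range.mpr (by omega)) hjy
  exact (Set.Finite.biUnion (Finset.range (R + 1)).finite_toSet
    fun j _ => t.base_finite x j).subset h

/-- generic disjoint-fibers counting lemma -/
lemma ncard_mul_le_of_disjoint {S G : Set V} (hS : S.Finite) (hG : G.Finite)
    {A : V → Set V} (hsub : ∀ x ∈ S, A x ⊆ G)
    (hdisj : ∀ x ∈ S, ∀ y ∈ S, x ≠ y → Disjoint (A x) (A y))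
    {c : ℕ} (hc : ∀ x ∈ S, c ≤ (A x).ncard) :
    S.ncard * c ≤ G.ncard := by
  classical
  set s := hS.toFinset with hs
  set f : V → Finset V := fun x => hG.toFinset.filter (· ∈ A x) with hf
  have hfA : ∀ x ∈ S, (f x : Set V) = A x := by
    intro x hx
    ext y
    simp only [hf, Finset.coe_filter, mem_setOf_eq, Set.Finite.mem_toFinset]
    exact ⟨fun h => h.2, fun h => ⟨hsub x hx h, h⟩⟩
  have hdisj' : ∀ x ∈ s, ∀ y ∈ s, x ≠ y → Disjoint (f x) (f y) := by
    intro x hx y hy hxy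
    rw [Set.Finite.mem_toFinset] at hx hy
    rw [Finset.disjoint_coe.symm, hfA x hx, hfA y hy]
    exact hdisj x hx y hy hxy
  have hcard : ∀ x ∈ s, c ≤ (f x).card := by
    intro x hx
    rw [Set.Finite.mem_toFinset] at hx
    have : (f x).card = (A x).ncard := by
      rw [← hfA x hx, Set.ncard_coe_finset]
    rw [this]; exact hc x hx
  calc S.ncard * c = ∑ _x ∈ s, c := by
        rw [Finset.sum_const, smul_eq_mul, Set.ncard_eq_toFinset_card _ hS]
    _ ≤ ∑ x ∈ s, (f x).card := Finset.sum_le_sum hcard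
    _ = (s.biUnion f).card := (Finset.card_biUnion hdisj').symm
    _ ≤ hG.toFinset.card := Finset.card_le_card (by
        intro y hy
        simp only [Finset.mem_biUnion] at hy
        obtain ⟨x, _, hyx⟩ := hy
        exact (Finset.mem_filter.mp hyx).1)
    _ = G.ncard := (Set.ncard_eq_toFinset_card _ hG).symm

lemma base_card (hthick : t.Thick) (x : V) (n : ℕ) : 2 ^ n ≤ (t.base x n).ncard := by
  induction n generalizing x with
  | zero => simp [base]
  | succ n ih =>
    have h := ncard_mul_le_of_disjoint (S := t.succs x) (G := t.base x (n+1))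
      (t.fiber_finite x) (t.base_finite x (n+1))
      (A := fun w => t.base w n)
      (by intro w hw; rw [t.base_succ_eq]; exact Set.subset_biUnion_of_mem (u := fun w => t.base w n) hw)
      (by
        intro w hw w' hw' hne
        rw [Set.disjoint_left]
        intro y hy hy'
        exact hne (hy.symm.trans hy'))
      (fun w _ => ih w)
    calc 2 ^ (n+1) = 2 * 2 ^ n := by ring
      _ ≤ (t.succs x).ncard * 2 ^ n := Nat.mul_le_mul_right _ (hthick x)
      _ ≤ _ := h

lemma esize_eq_ncard {E : Set V} (hE : E.Finite) : esize E = (E.ncard : ℝ≥0∞) := by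
  haveI := hE.fintype
  rw [esize, tsum_fintype]
  simp [Finset.card_univ]

lemma esize_mono {E F : Set V} (h : E ⊆ F) : esize E ≤ esize F := by
  rw [esize, esize, tsum_subtype E (fun _ => (1:ℝ≥0∞)), tsum_subtype F (fun _ => (1:ℝ≥0∞))]
  exact ENNReal.tsum_le_tsum fun v =>
    Set.indicator_le_indicator_of_subset h (fun _ => zero_le) v

end TreeData

namespace TreeData
variable {V : Type*}

lemma exists_deep (t : TreeData V) {𝒢 : Finset (V × ℕ)}
    (hmax : ∀ a ∈ 𝒢, ∀ b ∈ 𝒢, t.tri a.1 a.2 ⊆ t.tri b.1 b.2 → t.tri a.1 a.2 = t.tri b.1 b.2)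
    {x : V} {k : ℕ} (hk : 2 ≤ k)
    (hx : {a : V × ℕ | a ∈ 𝒢 ∧ x ∈ t.tri a.1 a.2}.ncard = k) :
    ∃ a ∈ 𝒢, t.base x (k - 2) ⊆ t.tri a.1 a.2 := by
  classical
  set A : Finset (V × ℕ) := 𝒢.filter (fun a => x ∈ t.tri a.1 a.2) with hA
  have hAset : {a : V × ℕ | a ∈ 𝒢 ∧ x ∈ t.tri a.1 a.2} = ↑A := by
    ext a; simp [hA]
  have hAcard : A.card = k := by
    rw [← Set.ncard_coe_finset, ← hAset, hx]
  set m : V × ℕ → ℕ := fun a => a.2 - (t.ht a.1 - t.ht x).toNat with hm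
  -- for a ∈ A, the depth j is determined and m a = a.2 - j
  have hj : ∀ a ∈ A, ∀ j : ℕ, t.pred^[j] x = a.1 → (t.ht a.1 - t.ht x).toNat = j := by
    intro a _ j hpj
    have : t.ht a.1 = t.ht x + j := by rw [← hpj, t.ht_iterate]
    omega
  have key : ∀ a ∈ A, ∀ b ∈ A, ∀ ja jb : ℕ, t.pred^[ja] x = a.1 → ja ≤ a.2 →
      t.pred^[jb] x = b.1 → jb ≤ b.2 → a.2 - ja = b.2 - jb → ja < jb → False := by
    intro a ha b hb ja jb hpa hja hpb hjb hmm hlt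
    have ha𝒢 := (Finset.mem_filter.mp ha).1
    have hb𝒢 := (Finset.mem_filter.mp hb).1
    have hsub : t.tri a.1 a.2 ⊆ t.tri b.1 b.2 := by
      rintro y ⟨i, hi, hpi⟩
      refine ⟨i + (jb - ja), by omega, ?_⟩
      have h1 : t.pred^[jb - ja] a.1 = b.1 := by
        rw [← hpa, ← Function.iterate_add_apply]
        rw [show jb - ja + ja = jb by omega, hpb]
      rw [show i + (jb - ja) = (jb - ja) + i by omega, Function.iterate_add_apply, hpi, h1]
    have heq := hmax a ha𝒢 b hb𝒢 hsub
    have hb1 : b.1 ∈ t.tri a.1 a.2 := heq ▸ ⟨0, Nat.zero_le _, rfl⟩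
    obtain ⟨i, hi, hpi⟩ := hb1
    have h1 : t.ht a.1 = t.ht x + ja := by rw [← hpa, t.ht_iterate]
    have h2 : t.ht b.1 = t.ht x + jb := by rw [← hpb, t.ht_iterate]
    have h3 : t.ht a.1 = t.ht b.1 + i := by rw [← hpi, t.ht_iterate]
    omega
  have hinj : Set.InjOn m ↑A := by
    intro a ha b hb hmab
    obtain ⟨ja, hja, hpa⟩ := (Finset.mem_filter.mp (by exact_mod_cast ha)).2
    obtain ⟨jb, hjb, hpb⟩ := (Finset.mem_filter.mp (by exact_mod_cast hb)).2
    have ha' : a ∈ A := by exact_mod_cast ha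
    have hb' : b ∈ A := by exact_mod_cast hb
    have hma : m a = a.2 - ja := by rw [hm]; simp only []; rw [hj a ha' ja hpa]
    have hmb : m b = b.2 - jb := by rw [hm]; simp only []; rw [hj b hb' jb hpb]
    have hmm : a.2 - ja = b.2 - jb := by rw [← hma, ← hmb, hmab]
    rcases lt_trichotomy ja jb with h | h | h
    · exact absurd (key a ha' b hb' ja jb hpa hja hpb hjb hmm h) (by simp)
    · subst h
      have h12 : a.1 = b.1 := by rw [← hpa, hpb]
      have h22 : a.2 = b.2 := by omega
      exact Prod.ext h12 h22
    · exact absurd (key b hb' a ha' jb ja hpb hjb hpa hja hmm.symm h) (by simp)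
  have himg : (A.image m).card = k := by rw [Finset.card_image_of_injOn hinj, hAcard]
  have hex : ∃ a ∈ A, k - 1 ≤ m a := by
    by_contra hcon
    push_neg at hcon
    have hsub : A.image m ⊆ Finset.range (k - 1) := by
      intro v hv
      obtain ⟨a, ha, rfl⟩ := Finset.mem_image.mp hv
      exact Finset.mem_range.mpr (hcon a ha)
    have := Finset.card_le_card hsub
    rw [himg, Finset.card_range] at this
    omega
  obtain ⟨a, ha, hma⟩ := hex
  obtain ⟨ja, hja, hpa⟩ := (Finset.mem_filter.mp ha).2
  refine ⟨a, (Finset.mem_filter.mp ha).1, ?_⟩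
  intro y hy
  have hmaj : m a = a.2 - ja := by rw [hm]; simp only []; rw [hj a ha ja hpa]
  refine ⟨ja + (k - 2), by omega, ?_⟩
  rw [show ja + (k - 2) = ja + (k-2) from rfl, Function.iterate_add_apply, hy, hpa]

end TreeData

/-- For a finite collection `𝒢` of maximal triangles with union `G`,
the set `Ω_k` of points lying in exactly `k` triangles of `𝒢` satisfies
`|Ω_k| ≤ 2^{2-k} |G|`. -/
theorem stmt8 {V : Type*} (t : TreeData V) (hthick : t.Thick) (𝒢 : Finset (V × ℕ))
    (hmax : ∀ a ∈ 𝒢, ∀ b ∈ 𝒢, t.tri a.1 a.2 ⊆ t.tri b.1 b.2 → t.tri a.1 a.2 = t.tri b.1 b.2)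
    (k : ℕ) (hk : 1 ≤ k) :
    TreeData.esize {x ∈ ⋃ a ∈ 𝒢, t.tri a.1 a.2 |
        {a : V × ℕ | a ∈ 𝒢 ∧ x ∈ t.tri a.1 a.2}.ncard = k} ≤
      (2 : ℝ≥0∞) ^ ((2 : ℤ) - k) * TreeData.esize (⋃ a ∈ 𝒢, t.tri a.1 a.2) := by
  classical
  set G : Set V := ⋃ a ∈ 𝒢, t.tri a.1 a.2 with hGdef
  set Ω : Set V := {x ∈ G | {a : V × ℕ | a ∈ 𝒢 ∧ x ∈ t.tri a.1 a.2}.ncard = k} with hΩdef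
  have hG : G.Finite := Set.Finite.biUnion 𝒢.finite_toSet fun a _ => t.tri_finite a.1 a.2
  have hΩsub : Ω ⊆ G := Set.sep_subset _ _
  have hΩ : Ω.Finite := hG.subset hΩsub
  rcases eq_or_lt_of_le hk with h1 | h2
  · -- k = 1
    have : ((2 : ℝ≥0∞)) ^ ((2 : ℤ) - k) = 2 := by
      rw [← h1]; norm_num
    rw [this]
    calc TreeData.esize Ω ≤ TreeData.esize G := TreeData.esize_mono hΩsub
      _ ≤ 2 * TreeData.esize G := le_mul_of_one_le_left zero_le one_le_two
  · -- 2 ≤ k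
    have hk2 : 2 ≤ k := h2
    have hnat : Ω.ncard * 2 ^ (k - 2) ≤ G.ncard := by
      refine TreeData.ncard_mul_le_of_disjoint hΩ hG (A := fun x => t.base x (k - 2)) ?_ ?_ ?_
      · intro x hx
        obtain ⟨a, ha, hsub⟩ := t.exists_deep hmax hk2 hx.2
        exact hsub.trans (Set.subset_biUnion_of_mem (u := fun a => t.tri a.1 a.2) ha)
      · intro x _ y _ hxy
        rw [Set.disjoint_left]
        intro z hz hz'
        exact hxy (hz.symm.trans hz')
      · intro x _
        exact t.base_card hthick x (k - 2)
    rw [TreeData.esize_eq_ncard hΩ, TreeData.esize_eq_ncard hG]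
    have h2e : (2 : ℝ≥0∞) ^ ((2 : ℤ) - k) = ((2 : ℝ≥0∞) ^ (k - 2)) ⁻¹ := by
      rw [← zpow_natCast (2 : ℝ≥0∞) (k - 2),
        ← ENNReal.zpow_neg (2 : ℝ≥0∞)]
      congr 1
      omega
    rw [h2e, ← ENNReal.div_eq_inv_mul]
    rw [ENNReal.le_div_iff_mul_le (Or.inl (by positivity)) (Or.inl (ENNReal.pow_ne_top ENNReal.ofNat_ne_top))]
    exact_mod_cast hnat
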